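/- If a graph G admits an S-coloring for a non-decreasing sequence S=(s_1,...,s_k) of positive integers, then the subdivision D(G) admits a (1, 2s_1+1, 2s_2+1, ..., 2s_k+1)-coloring. -/

import Mathlib

open SimpleGraph

/-- The subdivision `D(G)` of a graph `G`: every edge is subdivided once. -/
def Subdivision {V : Type*} (G : SimpleGraph V) : SimpleGraph (V ⊕ G.edgeSet) where
  Adj x y := match x, y with
    | Sum.inl v, Sum.inr e => v ∈ (e : Sym2 V)
    | Sum.inr e, Sum.inl v => v ∈ (e : Sym2 V)
    | _, _ => False
  symm := by constructor; rintro (v|e) (w|f) h <;> simp_all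
  loopless := by constructor; rintro (v|e) h <;> simp_all

/-- `c` is an `S`-coloring of `G` where `s` gives the distance requirements:
two distinct vertices of color `i` must be at distance at least `s i + 1`. -/
def IsSColoring {V : Type*} {k : ℕ} (G : SimpleGraph V) (s : Fin k → ℕ) (c : V → Fin k) : Prop :=
  ∀ u v : V, u ≠ v → c u = c v → (↑(s (c u) + 1) : ℕ∞) ≤ G.edist u v

/-- `c` is a packing `k`-coloring of `G` with colors `1,…,k`. -/
def IsPackingColoring {V : Type*} (G : SimpleGraph V) (k : ℕ) (c : V → ℕ) : Prop :=
  (∀ v, 1 ≤ c v ∧ c v ≤ k) ∧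
  ∀ u v : V, u ≠ v → c u = c v → (↑(c u + 1) : ℕ∞) ≤ G.edist u v

/-- A graph is 2-degenerate: every (finite, induced) subgraph has a vertex of degree at most 2. -/
def TwoDegenerate {V : Type*} [DecidableEq V] (G : SimpleGraph V) [DecidableRel G.Adj] : Prop :=
  ∀ W : Finset V, W.Nonempty → ∃ v ∈ W, (W.filter (fun w => G.Adj v w)).card ≤ 2

lemma subdiv_adj_of_mem {V : Type*} {G : SimpleGraph V} {e : G.edgeSet} {u w : V}
    (hu : u ∈ (e : Sym2 V)) (hw : w ∈ (e : Sym2 V)) (hne : u ≠ w) : G.Adj u w := by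
  obtain ⟨e, he⟩ := e
  have h2 : e = s(u, w) := (Sym2.mem_and_mem_iff hne).mp ⟨hu, hw⟩
  exact G.mem_edgeSet.mp (h2 ▸ he)

lemma subdiv_walk_len {V : Type*} (G : SimpleGraph V) :
    ∀ (n : ℕ) (u v : V) (p : (Subdivision G).Walk (Sum.inl u) (Sum.inl v)),
      p.length = n → 2 * G.edist u v ≤ (p.length : ℕ∞) := by
  intro n
  induction n using Nat.strong_induction_on with
  | _ n ih =>
    intro u v p hn
    cases p with
    | nil => simp [edist_self]
    | cons h q =>
      rename_i x
      match x, h with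
      | Sum.inr e, h =>
        cases q with
        | cons h' q' =>
          rename_i y
          match y, h' with
          | Sum.inl w, h' =>
            have hG : G.edist u v ≤ 1 + G.edist w v := by
              refine le_trans (G.edist_triangle (v := w)) ?_
              gcongr
              rcases eq_or_ne u w with rfl | hne
              · simp [edist_self]
              · exact le_of_eq (edist_eq_one_iff_adj.mpr (subdiv_adj_of_mem h h' hne))
            have hq := ih q'.length (by simp [Walk.length_cons] at hn; omega) w v q' rfl
            calc 2 * G.edist u v ≤ 2 * (1 + G.edist w v) := by gcongr
              _ = 2 + 2 * G.edist w v := by ring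
              _ ≤ 2 + (q'.length : ℕ∞) := by gcongr
              _ = _ := by push_cast [Walk.length_cons]; ring

lemma subdiv_edist {V : Type*} (G : SimpleGraph V) (u v : V) :
    2 * G.edist u v ≤ (Subdivision G).edist (Sum.inl u) (Sum.inl v) := by
  rcases eq_or_ne ((Subdivision G).edist (Sum.inl u) (Sum.inl v)) ⊤ with h | h
  · simp [h]
  · obtain ⟨p, hp⟩ := exists_walk_of_edist_ne_top h
    rw [← hp]; exact subdiv_walk_len G p.length u v p rfl

theorem stmt2 {V : Type*} {k : ℕ} (G : SimpleGraph V) (s : Fin k → ℕ)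
    (hmono : Monotone s) (hpos : ∀ i, 1 ≤ s i)
    (c : V → Fin k) (hc : IsSColoring G s c) :
    ∃ c' : V ⊕ G.edgeSet → Fin (k + 1),
      IsSColoring (Subdivision G) (Fin.cons 1 (fun i => 2 * s i + 1)) c' := by
  refine ⟨Sum.elim (fun v => (c v).succ) (fun _ => 0), ?_⟩
  rintro (u|e) (v|f) hne hcol
  · simp only [Sum.elim_inl] at hcol ⊢
    have hcc : c u = c v := Fin.succ_injective _ hcol
    have hne' : u ≠ v := fun h => hne (by rw [h])
    have h1 := hc u v hne' hcc
    rw [Fin.cons_succ]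
    calc ((2 * s (c u) + 1 + 1 : ℕ) : ℕ∞) = 2 * ((s (c u) + 1 : ℕ) : ℕ∞) := by push_cast; ring
      _ ≤ 2 * G.edist u v := by gcongr
      _ ≤ _ := subdiv_edist G u v
  · exact absurd hcol (by simp [Fin.succ_ne_zero])
  · exact absurd hcol.symm (by simp [Fin.succ_ne_zero])
  · simp only [Sum.elim_inr, Fin.cons_zero]
    have hne' : (Sum.inr e : V ⊕ G.edgeSet) ≠ Sum.inr f := hne
    have h0 : (Subdivision G).edist (Sum.inr e) (Sum.inr f) ≠ 0 :=
      fun h => hne' (edist_eq_zero_iff.mp h)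
    have h1 : (Subdivision G).edist (Sum.inr e) (Sum.inr f) ≠ 1 := by
      intro h
      have := edist_eq_one_iff_adj.mp h
      simp [Subdivision] at this
    have hlt : 1 < (Subdivision G).edist (Sum.inr e) (Sum.inr f) :=
      lt_of_le_of_ne (ENat.one_le_iff_ne_zero.mpr h0) (Ne.symm h1)
    have h2 : (1 : ℕ∞) + 1 ≤ (Subdivision G).edist (Sum.inr e) (Sum.inr f) :=
      Order.add_one_le_of_lt hlt
    simpa [one_add_one_eq_two] using h2
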